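/- arXiv:2602.16605 — 4 statements merged into one kernel-verified Lean document; each statement's English description precedes it below -/
import Mathlib

section
/- Let T be a rooted tree, and let u₁v₁ and u₂v₂ be two transversal pairs of T (i.e., in each pair neither element is an ancestor of the other) that do not cross. Then the rectangles R₁ = L(u₁) × L(v₁) and R₂ = L(u₂) × L(v₂) are either disjoint, or one is contained in the other (i.e., the family of such rectangles is laminar), provided for each i the intervals L(uᵢ), L(vᵢ) are disjoint. -/
/-- In a rooted tree, if `u₁v₁` and `u₂v₂` are non-crossing transversal pairs
(in each pair neither node is an ancestor of the other), and for each `i` the leaf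
sets `L uᵢ`, `L vᵢ` are disjoint, then the rectangles `L u₁ ×ˢ L v₁` and
`L u₂ ×ˢ L v₂` are disjoint or one contains the other. -/
theorem stmt1 {V : Type*} (anc : V → V → Prop)
    (hrefl : ∀ v, anc v v)
    (htrans : ∀ u v w, anc u v → anc v w → anc u w)
    (hantisymm : ∀ u v, anc u v → anc v u → u = v)
    (htree : ∀ u v w, anc u w → anc v w → anc u v ∨ anc v u)
    (IsLeaf : V → Prop)
    (hleaf : ∀ v, ∃ l, IsLeaf l ∧ anc v l)
    (hbranch : ∀ u v, anc u v → u ≠ v → ∃ l, IsLeaf l ∧ anc u l ∧ ¬ anc v l)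
    (L : V → Set V) (hL : ∀ t, L t = {l | IsLeaf l ∧ anc t l})
    (u₁ v₁ u₂ v₂ : V)
    -- transversal pairs
    (htv₁ : ¬ anc u₁ v₁ ∧ ¬ anc v₁ u₁)
    (htv₂ : ¬ anc u₂ v₂ ∧ ¬ anc v₂ u₂)
    -- the two pairs do not cross
    (hnocross : ¬ ((((anc u₁ u₂ ∧ u₁ ≠ u₂) ∨ (anc u₁ v₂ ∧ u₁ ≠ v₂)) ∨
                    ((anc v₁ u₂ ∧ v₁ ≠ u₂) ∨ (anc v₁ v₂ ∧ v₁ ≠ v₂))) ∧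
                   (((anc u₂ u₁ ∧ u₂ ≠ u₁) ∨ (anc u₂ v₁ ∧ u₂ ≠ v₁)) ∨
                    ((anc v₂ u₁ ∧ v₂ ≠ u₁) ∨ (anc v₂ v₁ ∧ v₂ ≠ v₁)))))
    (hd₁ : Disjoint (L u₁) (L v₁))
    (hd₂ : Disjoint (L u₂) (L v₂)) :
    Disjoint (L u₁ ×ˢ L v₁) (L u₂ ×ˢ L v₂) ∨
      L u₁ ×ˢ L v₁ ⊆ L u₂ ×ˢ L v₂ ∨ L u₂ ×ˢ L v₂ ⊆ L u₁ ×ˢ L v₁ := by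
  have Lsub : ∀ s t, anc s t → L t ⊆ L s := by
    intro s t h l hl
    rw [hL] at hl ⊢
    exact ⟨hl.1, htrans s t l h hl.2⟩
  by_cases hdis : Disjoint (L u₁ ×ˢ L v₁) (L u₂ ×ˢ L v₂)
  · exact Or.inl hdis
  right
  rw [Set.not_disjoint_iff] at hdis
  obtain ⟨⟨a, b⟩, ⟨ha1, hb1⟩, ⟨ha2, hb2⟩⟩ := hdis
  simp only [hL, Set.mem_setOf_eq] at ha1 ha2 hb1 hb2
  have hu := htree u₁ u₂ a ha1.2 ha2.2
  have hv := htree v₁ v₂ b hb1.2 hb2.2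
  rcases hu with hu | hu <;> rcases hv with hv | hv
  · exact Or.inr (Set.prod_mono (Lsub _ _ hu) (Lsub _ _ hv))
  · by_cases heu : u₁ = u₂
    · subst heu
      exact Or.inl (Set.prod_mono (Lsub _ _ (hrefl u₁)) (Lsub _ _ hv))
    · by_cases hev : v₂ = v₁
      · subst hev
        exact Or.inr (Set.prod_mono (Lsub _ _ hu) (Lsub _ _ (hrefl v₂)))
      · exact absurd ⟨Or.inl (Or.inl ⟨hu, heu⟩), Or.inr (Or.inr ⟨hv, hev⟩)⟩ hnocross
  · by_cases heu : u₂ = u₁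
    · subst heu
      exact Or.inr (Set.prod_mono (Lsub _ _ (hrefl u₂)) (Lsub _ _ hv))
    · by_cases hev : v₁ = v₂
      · subst hev
        exact Or.inl (Set.prod_mono (Lsub _ _ hu) (Lsub _ _ (hrefl v₁)))
      · exact absurd ⟨Or.inr (Or.inr ⟨hv, hev⟩), Or.inl (Or.inl ⟨hu, heu⟩)⟩ hnocross
  · exact Or.inl (Set.prod_mono (Lsub _ _ hu) (Lsub _ _ hv))
end

section
/- For every integer n ≥ 1, if a family R of n pairwise-disjoint axis-aligned rectangles is contained in a rectangle R₀, then the set difference R₀ minus the union of the rectangles in R can be partitioned into at most O(n) pairwise-disjoint axis-aligned rectangles; concretely, at most 3n+1 rectangles suffice. -/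
namespace Stmt3Aux

open Set

variable (F : Set (ℤ × ℤ))

/-- top of the maximal free vertical run through `p` -/
noncomputable def hiY (p : ℤ × ℤ) : ℤ :=
  sSup {y | p.2 ≤ y ∧ ∀ t, p.2 ≤ t → t ≤ y → (p.1, t) ∈ F}

/-- bottom of the maximal free vertical run through `p` -/
noncomputable def loY (p : ℤ × ℤ) : ℤ :=
  sInf {y | y ≤ p.2 ∧ ∀ t, y ≤ t → t ≤ p.2 → (p.1, t) ∈ F}

/-- column `u` is "good" for key `(ℓ, h)` -/
def good (ℓ h u : ℤ) : Prop :=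
  (u, ℓ) ∈ F ∧ loY F (u, ℓ) = ℓ ∧ hiY F (u, ℓ) = h

noncomputable def xMin (p : ℤ × ℤ) : ℤ :=
  sInf {x | x ≤ p.1 ∧ ∀ u, x ≤ u → u ≤ p.1 → good F (loY F p) (hiY F p) u}

noncomputable def xMax (p : ℤ × ℤ) : ℤ :=
  sSup {x | p.1 ≤ x ∧ ∀ u, p.1 ≤ u → u ≤ x → good F (loY F p) (hiY F p) u}

noncomputable def cell (p : ℤ × ℤ) : Set (ℤ × ℤ) :=
  Icc (xMin F p) (xMax F p) ×ˢ Icc (loY F p) (hiY F p)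

variable {F}
variable {a₀ b₀ c₀ d₀ : ℤ}

section
variable (hF : ∀ z ∈ F, a₀ ≤ z.1 ∧ z.1 ≤ b₀ ∧ c₀ ≤ z.2 ∧ z.2 ≤ d₀)
include hF

lemma hiY_spec {p : ℤ × ℤ} (hp : p ∈ F) :
    p.2 ≤ hiY F p ∧ ∀ t, p.2 ≤ t → t ≤ hiY F p → (p.1, t) ∈ F := by
  have h1 : (p.2 : ℤ) ∈ {y | p.2 ≤ y ∧ ∀ t, p.2 ≤ t → t ≤ y → (p.1, t) ∈ F} := by
    refine ⟨le_rfl, fun t h1 h2 => ?_⟩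
    have : t = p.2 := le_antisymm h2 h1
    simpa [this]
  have h2 : BddAbove {y | p.2 ≤ y ∧ ∀ t, p.2 ≤ t → t ≤ y → (p.1, t) ∈ F} := by
    refine ⟨d₀, fun y hy => ?_⟩
    exact (hF _ (hy.2 y hy.1 le_rfl)).2.2.2
  exact Int.csSup_mem ⟨_, h1⟩ h2

lemma loY_spec {p : ℤ × ℤ} (hp : p ∈ F) :
    loY F p ≤ p.2 ∧ ∀ t, loY F p ≤ t → t ≤ p.2 → (p.1, t) ∈ F := by
  have h1 : (p.2 : ℤ) ∈ {y | y ≤ p.2 ∧ ∀ t, y ≤ t → t ≤ p.2 → (p.1, t) ∈ F} := by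
    refine ⟨le_rfl, fun t h1 h2 => ?_⟩
    have : t = p.2 := le_antisymm h2 h1
    simpa [this]
  have h2 : BddBelow {y | y ≤ p.2 ∧ ∀ t, y ≤ t → t ≤ p.2 → (p.1, t) ∈ F} := by
    refine ⟨c₀, fun y hy => ?_⟩
    exact (hF _ (hy.2 y le_rfl hy.1)).2.2.1
  exact Int.csInf_mem ⟨_, h1⟩ h2

lemma run_free {p : ℤ × ℤ} (hp : p ∈ F) :
    ∀ t, loY F p ≤ t → t ≤ hiY F p → (p.1, t) ∈ F := by
  intro t h1 h2
  rcases le_or_gt t p.2 with h | h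
  · exact (loY_spec hF hp).2 t h1 h
  · exact (hiY_spec hF hp).2 t h.le h2

lemma loY_le {p : ℤ × ℤ} (hp : p ∈ F) : loY F p ≤ p.2 := (loY_spec hF hp).1
lemma le_hiY {p : ℤ × ℤ} (hp : p ∈ F) : p.2 ≤ hiY F p := (hiY_spec hF hp).1

lemma hiY_succ {p : ℤ × ℤ} (hp : p ∈ F) : (p.1, hiY F p + 1) ∉ F := by
  intro hmem
  have h2 : BddAbove {y | p.2 ≤ y ∧ ∀ t, p.2 ≤ t → t ≤ y → (p.1, t) ∈ F} := by
    refine ⟨d₀, fun y hy => ?_⟩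
    exact (hF _ (hy.2 y hy.1 le_rfl)).2.2.2
  have hmem' : hiY F p + 1 ∈ {y | p.2 ≤ y ∧ ∀ t, p.2 ≤ t → t ≤ y → (p.1, t) ∈ F} := by
    refine ⟨by have := le_hiY hF hp; omega, fun t h1 h2' => ?_⟩
    rcases lt_or_eq_of_le h2' with h | h
    · exact (hiY_spec hF hp).2 t h1 (by omega)
    · rw [h]; exact hmem
  have := le_csSup h2 hmem'
  simp only [hiY] at this ⊢
  omega

lemma loY_pred {p : ℤ × ℤ} (hp : p ∈ F) : (p.1, loY F p - 1) ∉ F := by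
  intro hmem
  have h2 : BddBelow {y | y ≤ p.2 ∧ ∀ t, y ≤ t → t ≤ p.2 → (p.1, t) ∈ F} := by
    refine ⟨c₀, fun y hy => ?_⟩
    exact (hF _ (hy.2 y le_rfl hy.1)).2.2.1
  have hmem' : loY F p - 1 ∈ {y | y ≤ p.2 ∧ ∀ t, y ≤ t → t ≤ p.2 → (p.1, t) ∈ F} := by
    refine ⟨by have := loY_le hF hp; omega, fun t h1 h2' => ?_⟩
    rcases lt_or_eq_of_le h1 with h | h
    · exact (loY_spec hF hp).2 t (by omega) h2'
    · rw [← h]; exact hmem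
  have := csInf_le h2 hmem'
  simp only [loY] at this ⊢
  omega

lemma run_eq {p q : ℤ × ℤ} (hp : p ∈ F) (hq : q ∈ F) (hcol : q.1 = p.1)
    (h1 : loY F p ≤ q.2) (h2 : q.2 ≤ hiY F p) :
    loY F q = loY F p ∧ hiY F q = hiY F p := by
  have hbA : BddAbove {y | q.2 ≤ y ∧ ∀ t, q.2 ≤ t → t ≤ y → (q.1, t) ∈ F} := by
    refine ⟨d₀, fun y hy => ?_⟩
    exact (hF _ (hy.2 y hy.1 le_rfl)).2.2.2
  have hbB : BddBelow {y | y ≤ q.2 ∧ ∀ t, y ≤ t → t ≤ q.2 → (q.1, t) ∈ F} := by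
    refine ⟨c₀, fun y hy => ?_⟩
    exact (hF _ (hy.2 y le_rfl hy.1)).2.2.1
  constructor
  · -- loY q = loY p
    have hle : loY F q ≤ loY F p := by
      apply csInf_le hbB
      refine ⟨h1, fun t ht1 ht2 => ?_⟩
      rw [hcol]; exact run_free hF hp t ht1 (le_trans ht2 h2)
    have hge : loY F p ≤ loY F q := by
      by_contra hcon
      push_neg at hcon
      have : (q.1, loY F p - 1) ∈ F := by
        apply (loY_spec hF hq).2 _ (by omega) (by omega)
      rw [hcol] at this
      exact loY_pred hF hp this
    omega
  · have hle : hiY F p ≤ hiY F q := by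
      apply le_csSup hbA
      refine ⟨h2, fun t ht1 ht2 => ?_⟩
      rw [hcol]; exact run_free hF hp t (le_trans h1 ht1) ht2
    have hge : hiY F q ≤ hiY F p := by
      by_contra hcon
      push_neg at hcon
      have : (q.1, hiY F p + 1) ∈ F := by
        apply (hiY_spec hF hq).2 _ (by omega) (by omega)
      rw [hcol] at this
      exact hiY_succ hF hp this
    omega

end


section
variable (hF : ∀ z ∈ F, a₀ ≤ z.1 ∧ z.1 ≤ b₀ ∧ c₀ ≤ z.2 ∧ z.2 ≤ d₀)
include hF

lemma good_self {p : ℤ × ℤ} (hp : p ∈ F) : good F (loY F p) (hiY F p) p.1 := by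
  have hmem : (p.1, loY F p) ∈ F := run_free hF hp _ le_rfl (le_trans (loY_le hF hp) (le_hiY hF hp))
  refine ⟨hmem, ?_, ?_⟩
  · exact (run_eq hF hp hmem rfl le_rfl (le_trans (loY_le hF hp) (le_hiY hF hp))).1
  · exact (run_eq hF hp hmem rfl le_rfl (le_trans (loY_le hF hp) (le_hiY hF hp))).2

lemma good_bddBelow {ℓ h : ℤ} {z : ℤ} :
    BddBelow {x | x ≤ z ∧ ∀ u, x ≤ u → u ≤ z → good F ℓ h u} := by
  refine ⟨a₀, fun x hx => ?_⟩
  exact (hF _ (hx.2 x le_rfl hx.1).1).1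

lemma good_bddAbove {ℓ h : ℤ} {z : ℤ} :
    BddAbove {x | z ≤ x ∧ ∀ u, z ≤ u → u ≤ x → good F ℓ h u} := by
  refine ⟨b₀, fun x hx => ?_⟩
  exact (hF _ (hx.2 x hx.1 le_rfl).1).2.1

lemma xMin_spec {p : ℤ × ℤ} (hp : p ∈ F) :
    xMin F p ≤ p.1 ∧ ∀ u, xMin F p ≤ u → u ≤ p.1 → good F (loY F p) (hiY F p) u := by
  have hne : p.1 ∈ {x | x ≤ p.1 ∧ ∀ u, x ≤ u → u ≤ p.1 → good F (loY F p) (hiY F p) u} := by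
    refine ⟨le_rfl, fun u h1 h2 => ?_⟩
    have : u = p.1 := le_antisymm h2 h1
    rw [this]; exact good_self hF hp
  exact Int.csInf_mem ⟨_, hne⟩ (good_bddBelow hF)

lemma xMax_spec {p : ℤ × ℤ} (hp : p ∈ F) :
    p.1 ≤ xMax F p ∧ ∀ u, p.1 ≤ u → u ≤ xMax F p → good F (loY F p) (hiY F p) u := by
  have hne : p.1 ∈ {x | p.1 ≤ x ∧ ∀ u, p.1 ≤ u → u ≤ x → good F (loY F p) (hiY F p) u} := by
    refine ⟨le_rfl, fun u h1 h2 => ?_⟩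
    have : u = p.1 := le_antisymm h2 h1
    rw [this]; exact good_self hF hp
  exact Int.csSup_mem ⟨_, hne⟩ (good_bddAbove hF)

lemma good_of_mem {p : ℤ × ℤ} (hp : p ∈ F) {u : ℤ}
    (h1 : xMin F p ≤ u) (h2 : u ≤ xMax F p) : good F (loY F p) (hiY F p) u := by
  rcases le_or_gt u p.1 with h | h
  · exact (xMin_spec hF hp).2 u h1 h
  · exact (xMax_spec hF hp).2 u h.le h2

lemma xMin_pred {p : ℤ × ℤ} (hp : p ∈ F) :
    ¬ good F (loY F p) (hiY F p) (xMin F p - 1) := by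
  intro hg
  have hmem : xMin F p - 1 ∈
      {x | x ≤ p.1 ∧ ∀ u, x ≤ u → u ≤ p.1 → good F (loY F p) (hiY F p) u} := by
    refine ⟨by have := (xMin_spec hF hp).1; omega, fun u h1 h2 => ?_⟩
    rcases lt_or_eq_of_le h1 with h | h
    · exact (xMin_spec hF hp).2 u (by omega) h2
    · rw [← h]; exact hg
  have := csInf_le (good_bddBelow hF) hmem
  simp only [xMin] at this
  omega

lemma xMax_succ {p : ℤ × ℤ} (hp : p ∈ F) :
    ¬ good F (loY F p) (hiY F p) (xMax F p + 1) := by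
  intro hg
  have hmem : xMax F p + 1 ∈
      {x | p.1 ≤ x ∧ ∀ u, p.1 ≤ u → u ≤ x → good F (loY F p) (hiY F p) u} := by
    refine ⟨by have := (xMax_spec hF hp).1; omega, fun u h1 h2 => ?_⟩
    rcases lt_or_eq_of_le h2 with h | h
    · exact (xMax_spec hF hp).2 u h1 (by omega)
    · rw [h]; exact hg
  have := le_csSup (good_bddAbove hF) hmem
  simp only [xMax] at this
  omega

lemma mem_cell_self {p : ℤ × ℤ} (hp : p ∈ F) : p ∈ cell F p := by
  refine ⟨⟨(xMin_spec hF hp).1, (xMax_spec hF hp).1⟩, ⟨loY_le hF hp, le_hiY hF hp⟩⟩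

lemma cell_subset {p : ℤ × ℤ} (hp : p ∈ F) : cell F p ⊆ F := by
  rintro ⟨u, t⟩ ⟨⟨hu1, hu2⟩, ⟨ht1, ht2⟩⟩
  have hg := good_of_mem hF hp hu1 hu2
  have := run_free hF hg.1 t (by rw [hg.2.1]; exact ht1) (by rw [hg.2.2]; exact ht2)
  exact this

lemma key_of_mem_cell {p q : ℤ × ℤ} (hp : p ∈ F) (hq : q ∈ cell F p) :
    loY F q = loY F p ∧ hiY F q = hiY F p := by
  obtain ⟨⟨hu1, hu2⟩, ⟨ht1, ht2⟩⟩ := hq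
  have hg := good_of_mem hF hp hu1 hu2
  have hqF : q ∈ F := cell_subset hF hp ⟨⟨hu1, hu2⟩, ⟨ht1, ht2⟩⟩
  have hbase : (q.1, loY F p) ∈ F := hg.1
  have := run_eq hF hbase hqF rfl (by rw [hg.2.1]; exact ht1) (by rw [hg.2.2]; exact ht2)
  rw [hg.2.1, hg.2.2] at this
  exact this

lemma cell_eq_of_mem {p q : ℤ × ℤ} (hp : p ∈ F) (hq : q ∈ cell F p) :
    cell F q = cell F p := by
  obtain ⟨hkl, hkh⟩ := key_of_mem_cell hF hp hq
  obtain ⟨⟨hu1, hu2⟩, ⟨ht1, ht2⟩⟩ := hq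
  have hqF : q ∈ F := cell_subset hF hp ⟨⟨hu1, hu2⟩, ⟨ht1, ht2⟩⟩
  have hxmin : xMin F q = xMin F p := by
    have hSle : xMin F q ≤ xMin F p := by
      apply csInf_le (good_bddBelow hF)
      rw [hkl, hkh]
      exact ⟨hu1, fun u h1 h2 => good_of_mem hF hp h1 (le_trans h2 hu2)⟩
    have hSge : xMin F p ≤ xMin F q := by
      have hmem := Int.csInf_mem (s := {x | x ≤ q.1 ∧ ∀ u, x ≤ u → u ≤ q.1 →
          good F (loY F q) (hiY F q) u}) ⟨q.1, by
        refine ⟨le_rfl, fun u h1 h2 => ?_⟩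
        have : u = q.1 := le_antisymm h2 h1
        rw [this, hkl, hkh]; exact good_of_mem hF hp hu1 hu2⟩ (by rw [hkl, hkh]; exact good_bddBelow hF)
      rw [show sInf {x | x ≤ q.1 ∧ ∀ u, x ≤ u → u ≤ q.1 → good F (loY F q) (hiY F q) u}
          = xMin F q from rfl] at hmem
      apply csInf_le (good_bddBelow hF)
      refine ⟨le_trans hSle (xMin_spec hF hp).1, fun u h1 h2 => ?_⟩
      rcases le_or_gt u q.1 with h | h
      · have := hmem.2 u h1 h
        rwa [hkl, hkh] at this
      · exact good_of_mem hF hp (le_trans hu1 h.le) (le_trans h2 (xMax_spec hF hp).1)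
    omega
  have hxmax : xMax F q = xMax F p := by
    have hSge : xMax F p ≤ xMax F q := by
      apply le_csSup (good_bddAbove hF)
      rw [hkl, hkh]
      exact ⟨hu2, fun u h1 h2 => good_of_mem hF hp (le_trans hu1 h1) h2⟩
    have hSle : xMax F q ≤ xMax F p := by
      have hmem := Int.csSup_mem (s := {x | q.1 ≤ x ∧ ∀ u, q.1 ≤ u → u ≤ x →
          good F (loY F q) (hiY F q) u}) ⟨q.1, by
        refine ⟨le_rfl, fun u h1 h2 => ?_⟩
        have : u = q.1 := le_antisymm h2 h1
        rw [this, hkl, hkh]; exact good_of_mem hF hp hu1 hu2⟩ (by rw [hkl, hkh]; exact good_bddAbove hF)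
      rw [show sSup {x | q.1 ≤ x ∧ ∀ u, q.1 ≤ u → u ≤ x → good F (loY F q) (hiY F q) u}
          = xMax F q from rfl] at hmem
      apply le_csSup (good_bddAbove hF)
      refine ⟨le_trans (xMax_spec hF hp).1 hSge, fun u h1 h2 => ?_⟩
      rcases le_or_gt q.1 u with h | h
      · have := hmem.2 u h h2
        rwa [hkl, hkh] at this
      · exact good_of_mem hF hp (le_trans (xMin_spec hF hp).1 h1) (le_trans h.le hu2)
    omega
  unfold cell
  rw [hkl, hkh, hxmin, hxmax]
end

/-- indexing of the `3n+1` candidate special points -/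
def sp (n : ℕ) (Af Bf Cf Df : Fin n → ℤ) (a₀ c₀ : ℤ) (k : ℕ) : ℤ × ℤ :=
  if h1 : k < n then (Af ⟨k, h1⟩, Df ⟨k, h1⟩ + 1)
  else if h2 : k < 2*n then (Af ⟨k - n, by omega⟩, Cf ⟨k - n, by omega⟩ - 1)
  else if h3 : k < 3*n then (Bf ⟨k - 2*n, by omega⟩ + 1, Cf ⟨k - 2*n, by omega⟩)
  else (a₀, c₀)

lemma sp_case1 {n : ℕ} (Af Bf Cf Df : Fin n → ℤ) (a₀ c₀ : ℤ) (i : Fin n) :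
    sp n Af Bf Cf Df a₀ c₀ (i : ℕ) = (Af i, Df i + 1) := by
  unfold sp
  rw [dif_pos i.isLt]

lemma sp_case2 {n : ℕ} (Af Bf Cf Df : Fin n → ℤ) (a₀ c₀ : ℤ) (i : Fin n) :
    sp n Af Bf Cf Df a₀ c₀ (n + (i : ℕ)) = (Af i, Cf i - 1) := by
  have hi := i.isLt
  unfold sp
  rw [dif_neg (by omega), dif_pos (by omega)]
  simp only [show n + (i : ℕ) - n = (i : ℕ) from by omega, Fin.eta]

lemma sp_case3 {n : ℕ} (Af Bf Cf Df : Fin n → ℤ) (a₀ c₀ : ℤ) (i : Fin n) :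
    sp n Af Bf Cf Df a₀ c₀ (2*n + (i : ℕ)) = (Bf i + 1, Cf i) := by
  have hi := i.isLt
  unfold sp
  rw [dif_neg (by omega), dif_neg (by omega), dif_pos (by omega)]
  simp only [show 2*n + (i : ℕ) - 2*n = (i : ℕ) from by omega, Fin.eta]

lemma sp_case4 {n : ℕ} (Af Bf Cf Df : Fin n → ℤ) (a₀ c₀ : ℤ) :
    sp n Af Bf Cf Df a₀ c₀ (3*n) = (a₀, c₀) := by
  unfold sp
  rw [dif_neg (by omega)]
  rw [dif_neg (by omega)]
  rw [dif_neg (by omega)]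

end Stmt3Aux

open Stmt3Aux in
/-- The complement, inside a rectangle `R₀`, of `n ≥ 1` pairwise-disjoint axis-aligned
rectangles can be partitioned into at most `3n + 1` pairwise-disjoint axis-aligned
rectangles. -/
theorem stmt3 (n : ℕ) (hn : 1 ≤ n) (R₀ : Set (ℤ × ℤ))
    (hR₀ : ∃ a b c d : ℤ, R₀ = Set.Icc a b ×ˢ Set.Icc c d)
    (R : Fin n → Set (ℤ × ℤ))
    (hrect : ∀ i, ∃ a b c d : ℤ, R i = Set.Icc a b ×ˢ Set.Icc c d)
    (hsub : ∀ i, R i ⊆ R₀)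
    (hdisj : ∀ i j, i ≠ j → Disjoint (R i) (R j)) :
    ∃ (m : ℕ) (P : Fin m → Set (ℤ × ℤ)),
      m ≤ 3 * n + 1 ∧
      (∀ k, ∃ a b c d : ℤ, P k = Set.Icc a b ×ˢ Set.Icc c d) ∧
      (∀ k l, k ≠ l → Disjoint (P k) (P l)) ∧
      (⋃ k, P k) = R₀ \ ⋃ i, R i := by
  classical
  obtain ⟨a₀, b₀, c₀, d₀, rfl⟩ := hR₀
  choose Af Bf Cf Df hRend using hrect
  set F : Set (ℤ × ℤ) := (Set.Icc a₀ b₀ ×ˢ Set.Icc c₀ d₀) \ ⋃ i, R i with hFdef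
  have hF : ∀ z ∈ F, a₀ ≤ z.1 ∧ z.1 ≤ b₀ ∧ c₀ ≤ z.2 ∧ z.2 ≤ d₀ := by
    intro z hz
    rw [hFdef] at hz
    exact ⟨hz.1.1.1, hz.1.1.2, hz.1.2.1, hz.1.2.2⟩
  have hFb : ∀ x y : ℤ, ((x, y) : ℤ × ℤ) ∈ F → a₀ ≤ x ∧ x ≤ b₀ ∧ c₀ ≤ y ∧ y ≤ d₀ :=
    fun x y hz => hF _ hz
  have hmemR : ∀ (i : Fin n) (x y : ℤ),
      ((x, y) : ℤ × ℤ) ∈ R i ↔ (Af i ≤ x ∧ x ≤ Bf i ∧ Cf i ≤ y ∧ y ≤ Df i) := by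
    intro i x y
    rw [hRend i]
    constructor
    · rintro ⟨h1, h2⟩; exact ⟨h1.1, h1.2, h2.1, h2.2⟩
    · rintro ⟨h1, h2, h3, h4⟩; exact ⟨⟨h1, h2⟩, h3, h4⟩
  have hFnotR : ∀ (i : Fin n) (z : ℤ × ℤ), z ∈ F → z ∉ R i := by
    intro i z hz hm
    rw [hFdef] at hz
    exact hz.2 (Set.mem_iUnion.2 ⟨i, hm⟩)
  have hout : ∀ x y : ℤ, a₀ ≤ x → x ≤ b₀ → c₀ ≤ y → y ≤ d₀ → ((x, y) : ℤ × ℤ) ∉ F →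
      ∃ i, ((x, y) : ℤ × ℤ) ∈ R i := by
    intro x y h1 h2 h3 h4 hz
    by_contra hcon
    push_neg at hcon
    refine hz ?_
    rw [hFdef]
    exact ⟨⟨⟨h1, h2⟩, ⟨h3, h4⟩⟩, by simpa using hcon⟩
  have hcorner : ∀ (i : Fin n) (x y : ℤ), ((x, y) : ℤ × ℤ) ∈ R i →
      a₀ ≤ Af i ∧ Bf i ≤ b₀ ∧ c₀ ≤ Cf i ∧ Df i ≤ d₀ := by
    intro i x y hz
    rw [hmemR] at hz
    have h1 : ((Af i, Cf i) : ℤ × ℤ) ∈ R i := (hmemR i _ _).2 ⟨le_rfl, by omega, le_rfl, by omega⟩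
    have h2 : ((Bf i, Df i) : ℤ × ℤ) ∈ R i := (hmemR i _ _).2 ⟨by omega, le_rfl, by omega, le_rfl⟩
    have g1 := hsub i h1
    have g2 := hsub i h2
    exact ⟨g1.1.1, g2.1.2, g1.2.1, g2.2.2⟩
  -- every cell contains a special point
  have spec : ∀ p ∈ F, ((a₀, c₀) : ℤ × ℤ) ∈ cell F p ∨
      ∃ i, ((Af i, Df i + 1) : ℤ × ℤ) ∈ cell F p ∨ ((Af i, Cf i - 1) : ℤ × ℤ) ∈ cell F p ∨
        ((Bf i + 1, Cf i) : ℤ × ℤ) ∈ cell F p := by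
    intro p hp
    set ℓ := loY F p with hldef
    set h := hiY F p with hhdef
    set xL := xMin F p with hxdef
    have hxle : xMin F p ≤ p.1 := (xMin_spec hF hp).1
    have hxm : xMin F p ≤ xMax F p := le_trans hxle (xMax_spec hF hp).1
    have hgood : good F ℓ h xL := by
      rw [hldef, hhdef, hxdef]
      exact (xMin_spec hF hp).2 _ le_rfl (xMin_spec hF hp).1
    obtain ⟨hw₀, hw₀lo, hw₀hi⟩ := hgood
    have hℓh : ℓ ≤ h := by
      have h1 := loY_le hF hp
      have h2 := le_hiY hF hp
      omega
    have hcol : ∀ t : ℤ, ℓ ≤ t → t ≤ h → ((xL, t) : ℤ × ℤ) ∈ F := by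
      intro t h1 h2
      have := run_free hF hw₀ t (by rw [hw₀lo]; exact h1) (by rw [hw₀hi]; exact h2)
      exact this
    have hcell' : ∀ q : ℤ × ℤ, q.1 = xL → ℓ ≤ q.2 → q.2 ≤ h → q ∈ cell F p := by
      intro q h1 h2 h3
      have : q ∈ Set.Icc (xMin F p) (xMax F p) ×ˢ Set.Icc (loY F p) (hiY F p) :=
        Set.mem_prod.mpr ⟨Set.mem_Icc.mpr ⟨by omega, by omega⟩,
          Set.mem_Icc.mpr ⟨by omega, by omega⟩⟩
      exact this
    have hbounds : a₀ ≤ xL ∧ xL ≤ b₀ ∧ c₀ ≤ ℓ ∧ ℓ ≤ d₀ := hFb _ _ hw₀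
    have hhd : h ≤ d₀ := (hFb _ _ (hcol h hℓh le_rfl)).2.2.2
    have hnotgood : ¬ good F ℓ h (xL - 1) := by
      rw [hldef, hhdef, hxdef]
      exact xMin_pred hF hp
    -- the shared "key mismatch to the left" case
    have keycase : a₀ ≤ xL - 1 → ((xL - 1, ℓ) : ℤ × ℤ) ∈ F → loY F (xL - 1, ℓ) = ℓ →
        ∃ i, ((Af i, Df i + 1) : ℤ × ℤ) ∈ cell F p ∨ ((Af i, Cf i - 1) : ℤ × ℤ) ∈ cell F p ∨
          ((Bf i + 1, Cf i) : ℤ × ℤ) ∈ cell F p := by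
      intro hxa hw hlow
      obtain ⟨h', hh'⟩ : ∃ v, hiY F (xL - 1, ℓ) = v := ⟨_, rfl⟩
      have hℓh' : ℓ ≤ h' := by
        rw [← hh']
        exact le_hiY hF hw
      have hwrun : ∀ t : ℤ, ℓ ≤ t → t ≤ h' → ((xL - 1, t) : ℤ × ℤ) ∈ F := by
        intro t h1 h2
        have := run_free hF hw t (by rw [hlow]; exact h1) (by rw [hh']; exact h2)
        exact this
      have hh'd : h' ≤ d₀ := (hFb _ _ (hwrun h' hℓh' le_rfl)).2.2.2
      have hh'ne : h' ≠ h := by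
        intro he
        exact hnotgood ⟨hw, hlow, by rw [hh']; exact he⟩
      rcases lt_or_gt_of_ne hh'ne with hlt | hgt
      · -- h' < h : special point (Bf k + 1, Cf k)
        have hq : ((xL - 1, h' + 1) : ℤ × ℤ) ∉ F := by
          have := hiY_succ hF hw
          rw [hh'] at this
          exact this
        obtain ⟨k, hk⟩ := hout (xL - 1) (h' + 1) hxa (by omega) (by omega) (by omega) hq
        rw [hmemR] at hk
        have hBk : Bf k = xL - 1 := by
          by_contra hne
          exact hFnotR k _ (hcol (h' + 1) (by omega) (by omega))
            ((hmemR k _ _).2 ⟨by omega, by omega, by omega, by omega⟩)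
        have hCk : Cf k = h' + 1 := by
          by_contra hne
          exact hFnotR k _ (hwrun h' hℓh' le_rfl)
            ((hmemR k _ _).2 ⟨by omega, by omega, by omega, by omega⟩)
        exact ⟨k, Or.inr (Or.inr (hcell' (Bf k + 1, Cf k) (show Bf k + 1 = xL by omega)
          (show ℓ ≤ Cf k by omega) (show Cf k ≤ h by omega)))⟩
      · -- h' > h : special point (Af k, Cf k - 1)
        have hq : ((xL, h + 1) : ℤ × ℤ) ∉ F := by
          have := hiY_succ hF hw₀
          rw [hw₀hi] at this
          exact this
        obtain ⟨k, hk⟩ := hout xL (h + 1) (by omega) (by omega) (by omega) (by omega) hq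
        rw [hmemR] at hk
        have hAk : Af k = xL := by
          by_contra hne
          exact hFnotR k _ (hwrun (h + 1) (by omega) (by omega))
            ((hmemR k _ _).2 ⟨by omega, by omega, by omega, by omega⟩)
        have hCk : Cf k = h + 1 := by
          by_contra hne
          exact hFnotR k _ (hcol h hℓh le_rfl)
            ((hmemR k _ _).2 ⟨by omega, by omega, by omega, by omega⟩)
        exact ⟨k, Or.inr (Or.inl (hcell' (Af k, Cf k - 1) (show Af k = xL from hAk)
          (show ℓ ≤ Cf k - 1 by omega) (show Cf k - 1 ≤ h by omega)))⟩
    rcases eq_or_lt_of_le hbounds.2.2.1 with hlc | hlc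
    · -- ℓ = c₀
      rcases eq_or_lt_of_le hbounds.1 with hxa | hxa
      · -- xL = a₀ : the special box corner cell
        exact Or.inl (hcell' (a₀, c₀) (show a₀ = xL from hxa)
          (show ℓ ≤ c₀ by omega) (show c₀ ≤ h by omega))
      · by_cases hw : ((xL - 1, ℓ) : ℤ × ℤ) ∈ F
        · refine Or.inr (keycase (by omega) hw ?_)
          have hlo1 : loY F (xL - 1, ℓ) ≤ ℓ := loY_le hF hw
          have hlo2 : c₀ ≤ loY F (xL - 1, ℓ) := by
            have hm := run_free hF hw (loY F (xL - 1, ℓ)) le_rfl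
              (le_trans hlo1 (le_hiY hF hw))
            exact (hFb _ _ hm).2.2.1
          omega
        · obtain ⟨i, hi⟩ := hout (xL - 1) ℓ (by omega) (by omega) (by omega) (by omega) hw
          have hiR := hi
          rw [hmemR] at hi
          have hBi : Bf i = xL - 1 := by
            by_contra hne
            exact hFnotR i _ (hcol ℓ le_rfl hℓh)
              ((hmemR i _ _).2 ⟨by omega, by omega, by omega, by omega⟩)
          have hCi : Cf i = ℓ := by
            have := (hcorner i _ _ hiR).2.2.1
            omega
          exact Or.inr ⟨i, Or.inr (Or.inr (hcell' (Bf i + 1, Cf i)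
            (show Bf i + 1 = xL by omega) (show ℓ ≤ Cf i by omega) (show Cf i ≤ h by omega)))⟩
    · -- c₀ < ℓ : there is an obstacle just below the bottom-left cell corner
      have hz : ((xL, ℓ - 1) : ℤ × ℤ) ∉ F := by
        have := loY_pred hF hw₀
        rw [hw₀lo] at this
        exact this
      obtain ⟨m, hm⟩ := hout xL (ℓ - 1) (by omega) (by omega) (by omega) (by omega) hz
      have hmR := hm
      rw [hmemR] at hm
      have hDm : Df m = ℓ - 1 := by
        by_contra hne
        exact hFnotR m _ (hcol ℓ le_rfl hℓh)
          ((hmemR m _ _).2 ⟨by omega, by omega, by omega, by omega⟩)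
      have hcm := hcorner m _ _ hmR
      rcases eq_or_lt_of_le hm.1 with hAm | hAm
      · exact Or.inr ⟨m, Or.inl (hcell' (Af m, Df m + 1) (show Af m = xL from hAm)
          (show ℓ ≤ Df m + 1 by omega) (show Df m + 1 ≤ h by omega))⟩
      · have hxa : a₀ ≤ xL - 1 := by
          have := hcm.1
          omega
        have hzz : ((xL - 1, ℓ - 1) : ℤ × ℤ) ∈ R m :=
          (hmemR m _ _).2 ⟨by omega, by omega, by omega, by omega⟩
        by_cases hw : ((xL - 1, ℓ) : ℤ × ℤ) ∈ F
        · refine Or.inr (keycase hxa hw ?_)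
          have hlo1 : loY F (xL - 1, ℓ) ≤ ℓ := loY_le hF hw
          have hhb : ℓ ≤ hiY F (xL - 1, ℓ) := le_hiY hF hw
          rcases eq_or_lt_of_le hlo1 with he | hlt2
          · exact he
          · exfalso
            have hfree : ((xL - 1, ℓ - 1) : ℤ × ℤ) ∈ F := by
              have := run_free hF hw (ℓ - 1) (by omega) (by omega)
              exact this
            exact hFnotR m _ hfree hzz
        · obtain ⟨i, hi⟩ := hout (xL - 1) ℓ hxa (by omega) (by omega) (by omega) hw
          rw [hmemR] at hi
          have hBi : Bf i = xL - 1 := by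
            by_contra hne
            exact hFnotR i _ (hcol ℓ le_rfl hℓh)
              ((hmemR i _ _).2 ⟨by omega, by omega, by omega, by omega⟩)
          have hCi : Cf i = ℓ := by
            rcases eq_or_lt_of_le hi.2.2.1 with he | hlt2
            · exact he
            · exfalso
              have hzi : ((xL - 1, ℓ - 1) : ℤ × ℤ) ∈ R i :=
                (hmemR i _ _).2 ⟨by omega, by omega, by omega, by omega⟩
              have him : i = m := by
                by_contra hne
                exact Set.disjoint_left.1 (hdisj i m hne) hzi hzz
              have hc2 : Bf m = xL - 1 := him ▸ hBi
              omega
          exact Or.inr ⟨i, Or.inr (Or.inr (hcell' (Bf i + 1, Cf i)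
            (show Bf i + 1 = xL by omega) (show ℓ ≤ Cf i by omega) (show Cf i ≤ h by omega)))⟩
  -- the assembly
  set S : ℕ → ℤ × ℤ := sp n Af Bf Cf Df a₀ c₀ with hSdef
  have spec' : ∀ p ∈ F, ∃ k : ℕ, k < 3 * n + 1 ∧ S k ∈ cell F p := by
    intro p hp
    rcases spec p hp with hbox | ⟨i, hsp1 | hsp2 | hsp3⟩
    · refine ⟨3 * n, by omega, ?_⟩
      rw [hSdef, sp_case4]
      exact hbox
    · refine ⟨(i : ℕ), by have := i.isLt; omega, ?_⟩
      rw [hSdef, sp_case1]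
      exact hsp1
    · refine ⟨n + (i : ℕ), by have := i.isLt; omega, ?_⟩
      rw [hSdef, sp_case2]
      exact hsp2
    · refine ⟨2 * n + (i : ℕ), by have := i.isLt; omega, ?_⟩
      rw [hSdef, sp_case3]
      exact hsp3
  set Q : ℕ → Set (ℤ × ℤ) := fun k =>
    if S k ∈ F ∧ ∀ l : ℕ, l < k → S l ∈ F → cell F (S l) ≠ cell F (S k)
    then cell F (S k) else ∅ with hQdef
  have hQr : ∀ k : ℕ, Q k = ∅ ∨ (S k ∈ F ∧
      (∀ l : ℕ, l < k → S l ∈ F → cell F (S l) ≠ cell F (S k)) ∧ Q k = cell F (S k)) := by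
    intro k
    by_cases hc : S k ∈ F ∧ ∀ l : ℕ, l < k → S l ∈ F → cell F (S l) ≠ cell F (S k)
    · exact Or.inr ⟨hc.1, hc.2, by simp only [hQdef]; exact if_pos hc⟩
    · exact Or.inl (by simp only [hQdef]; exact if_neg hc)
  have hQpos : ∀ k : ℕ, S k ∈ F →
      (∀ l : ℕ, l < k → S l ∈ F → cell F (S l) ≠ cell F (S k)) → Q k = cell F (S k) := by
    intro k h1 h2
    simp only [hQdef]
    exact if_pos ⟨h1, h2⟩
  refine ⟨3 * n + 1, fun k => Q (k : ℕ), le_rfl, ?_, ?_, ?_⟩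
  · -- rectangles
    intro k
    rcases hQr (k : ℕ) with he | ⟨_, _, he⟩
    · refine ⟨0, -1, 0, -1, ?_⟩
      show Q (k : ℕ) = _
      rw [he, Set.Icc_eq_empty (by norm_num : ¬(0 : ℤ) ≤ -1), Set.empty_prod]
    · exact ⟨xMin F (S (k : ℕ)), xMax F (S (k : ℕ)), loY F (S (k : ℕ)), hiY F (S (k : ℕ)), he⟩
  · -- disjointness
    have hmain : ∀ k l : ℕ, k < l → ∀ z : ℤ × ℤ, z ∈ Q k → z ∈ Q l → False := by
      intro k l hkl z hzk hzl
      rcases hQr k with he | ⟨hkF, hkcond, he⟩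
      · rw [he] at hzk
        exact hzk
      rcases hQr l with he' | ⟨hlF, hlcond, he'⟩
      · rw [he'] at hzl
        exact hzl
      rw [he] at hzk
      rw [he'] at hzl
      have e1 : cell F z = cell F (S k) := cell_eq_of_mem hF hkF hzk
      have e2 : cell F z = cell F (S l) := cell_eq_of_mem hF hlF hzl
      exact hlcond k hkl hkF (by rw [← e1, ← e2])
    intro k l hkl
    rw [Set.disjoint_left]
    intro z hzk hzl
    have hzk' : z ∈ Q (k : ℕ) := hzk
    have hzl' : z ∈ Q (l : ℕ) := hzl
    have hne : (k : ℕ) ≠ (l : ℕ) := fun hc => hkl (Fin.ext hc)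
    rcases lt_or_gt_of_ne hne with hc | hc
    · exact hmain _ _ hc z hzk' hzl'
    · exact hmain _ _ hc z hzl' hzk'
  · -- the union
    ext z
    simp only [Set.mem_iUnion]
    constructor
    · rintro ⟨k, hzk⟩
      have hzk' : z ∈ Q (k : ℕ) := hzk
      rcases hQr (k : ℕ) with he | ⟨hkF, _, he⟩
      · rw [he] at hzk'
        exact absurd hzk' (Set.notMem_empty z)
      · rw [he] at hzk'
        exact cell_subset hF hkF hzk'
    · intro hz
      obtain ⟨k0, hk0lt, hk0mem⟩ := spec' z hz
      have hT : ∃ j : ℕ, j < 3 * n + 1 ∧ S j ∈ F ∧ cell F (S j) = cell F z :=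
        ⟨k0, hk0lt, cell_subset hF hz hk0mem, cell_eq_of_mem hF hz hk0mem⟩
      obtain ⟨hj1, hj2, hj3⟩ := Nat.find_spec hT
      refine ⟨⟨Nat.find hT, hj1⟩, ?_⟩
      show z ∈ Q (Nat.find hT)
      have hcond : ∀ l : ℕ, l < Nat.find hT → S l ∈ F →
          cell F (S l) ≠ cell F (S (Nat.find hT)) := by
        intro l hl hlF heq
        exact Nat.find_min hT hl ⟨by omega, hlF, by rw [heq, hj3]⟩
      rw [hQpos _ hj2 hcond, hj3]
      exact mem_cell_self hF hz
end

section
/- Let G be a graph on n ≥ 2 vertices such that every induced subgraph H of G with at least 2 vertices contains two distinct vertices u, v with sd_H(u,v) ≤ s. Then for every integer k with 2k ≤ n, G contains k pairwise-disjoint pairs (u₁,v₁), …, (u_k,v_k) of distinct vertices such that sd_G(uᵢ,vᵢ) ≤ s + 2(k-1) for every i. -/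
/-- The symmetric difference `sd_{G[s]}(u,v)` of `u` and `v` inside the subgraph of `G`
induced on the finset `s`: the size of `(N(u)\{v}) △ (N(v)\{u})`, neighborhoods taken
within `s`. -/
def sdOn {V : Type*} [Fintype V] [DecidableEq V] (G : SimpleGraph V) [DecidableRel G.Adj]
    (s : Finset V) (u v : V) : ℕ :=
  ((((G.neighborFinset u ∩ s) \ {v}) \ ((G.neighborFinset v ∩ s) \ {u})) ∪
   (((G.neighborFinset v ∩ s) \ {u}) \ ((G.neighborFinset u ∩ s) \ {v}))).card

lemma sdOn_mono {V : Type*} [Fintype V] [DecidableEq V] (G : SimpleGraph V)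
    [DecidableRel G.Adj] (t t' : Finset V) (h : t' ⊆ t) (u v : V) :
    sdOn G t u v ≤ sdOn G t' u v + (t \ t').card := by
  unfold sdOn
  refine le_trans (Finset.card_le_card (?_ :
    _ ⊆ (((((G.neighborFinset u ∩ t') \ {v}) \ ((G.neighborFinset v ∩ t') \ {u})) ∪
   (((G.neighborFinset v ∩ t') \ {u}) \ ((G.neighborFinset u ∩ t') \ {v}))) ∪ (t \ t'))))
    (le_trans (Finset.card_union_le _ _) le_rfl)
  intro w hw
  have hsub : w ∈ t' → w ∈ t := @h w
  simp only [Finset.mem_union, Finset.mem_sdiff, Finset.mem_inter, Finset.mem_singleton,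
    SimpleGraph.mem_neighborFinset] at *
  tauto

lemma stmt8_aux {V : Type*} [Fintype V] [DecidableEq V] (G : SimpleGraph V)
    [DecidableRel G.Adj] (s : ℕ)
    (hsd : ∀ t : Finset V, 2 ≤ t.card → ∃ u ∈ t, ∃ v ∈ t, u ≠ v ∧ sdOn G t u v ≤ s) :
    ∀ k : ℕ, ∀ t : Finset V, 2 * k ≤ t.card →
      ∃ p : Fin k → V × V,
        (∀ i, (p i).1 ∈ t) ∧ (∀ i, (p i).2 ∈ t) ∧
        (∀ i, (p i).1 ≠ (p i).2) ∧
        (Function.Injective fun x : Fin k × Bool =>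
          if x.2 then (p x.1).1 else (p x.1).2) ∧
        (∀ i, sdOn G t (p i).1 (p i).2 ≤ s + 2 * (k - 1)) := by
  intro k
  induction k with
  | zero =>
    intro t _
    exact ⟨fun i => i.elim0, fun i => i.elim0, fun i => i.elim0, fun i => i.elim0,
      fun x y _ => x.1.elim0, fun i => i.elim0⟩
  | succ k ih =>
    intro t ht
    obtain ⟨u, hu, v, hv, huv, hsduv⟩ := hsd t (by omega)
    set t' : Finset V := (t.erase u).erase v with ht'
    have hsub : t' ⊆ t := (Finset.erase_subset _ _).trans (Finset.erase_subset _ _)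
    have hut' : u ∉ t' := fun h => Finset.notMem_erase u t (Finset.mem_of_mem_erase h)
    have hvt' : v ∉ t' := Finset.notMem_erase v _
    have hcard' : t'.card = t.card - 2 := by
      rw [ht', Finset.card_erase_of_mem (Finset.mem_erase.mpr ⟨Ne.symm huv, hv⟩),
        Finset.card_erase_of_mem hu]
      omega
    have hdiff : (t \ t').card ≤ 2 := by
      have : t \ t' ⊆ {u, v} := by
        intro w hw
        simp only [Finset.mem_sdiff, ht', Finset.mem_erase, Finset.mem_insert,
          Finset.mem_singleton] at *
        tauto
      exact le_trans (Finset.card_le_card this)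
        (le_trans (Finset.card_insert_le _ _) (by simp))
    obtain ⟨p, hp1, hp2, hpne, hpinj, hpsd⟩ := ih t' (by omega)
    refine ⟨Fin.cons (u, v) p, ?_, ?_, ?_, ?_, ?_⟩
    · intro i
      induction i using Fin.cases with
      | zero => simpa using hu
      | succ i => simpa using hsub (hp1 i)
    · intro i
      induction i using Fin.cases with
      | zero => simpa using hv
      | succ i => simpa using hsub (hp2 i)
    · intro i
      induction i using Fin.cases with
      | zero => simpa using huv
      | succ i => simpa using hpne i
    · rintro ⟨i, b⟩ ⟨j, c⟩ hxy
      simp only at hxy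
      induction i using Fin.cases with
      | zero =>
        induction j using Fin.cases with
        | zero =>
          simp only [Fin.cons_zero] at hxy
          cases b <;> cases c <;> simp_all
        | succ j =>
          exfalso
          simp only [Fin.cons_zero, Fin.cons_succ] at hxy
          cases b <;> cases c <;> simp only [Bool.false_eq_true, if_true, if_false, ite_false, ite_true] at hxy
          · exact hvt' (hxy ▸ hp2 j)
          · exact hvt' (hxy ▸ hp1 j)
          · exact hut' (hxy ▸ hp2 j)
          · exact hut' (hxy ▸ hp1 j)
      | succ i =>
        induction j using Fin.cases with
        | zero =>
          exfalso
          simp only [Fin.cons_zero, Fin.cons_succ] at hxy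
          cases b <;> cases c <;> simp only [Bool.false_eq_true, if_true, if_false, ite_false, ite_true] at hxy
          · exact hvt' (hxy ▸ hp2 i)
          · exact hut' (hxy ▸ hp2 i)
          · exact hvt' (hxy ▸ hp1 i)
          · exact hut' (hxy ▸ hp1 i)
        | succ j =>
          simp only [Fin.cons_succ] at hxy
          have := hpinj (a₁ := (i, b)) (a₂ := (j, c)) hxy
          simp only [Prod.mk.injEq] at this ⊢
          exact ⟨congrArg Fin.succ this.1, this.2⟩
    · intro i
      induction i using Fin.cases with
      | zero =>
        simp only [Fin.cons_zero]
        omega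
      | succ i =>
        simp only [Fin.cons_succ]
        have h1 := hpsd i
        have h2 := sdOn_mono G t t' hsub (p i).1 (p i).2
        have hk : 1 ≤ k := i.pos
        omega

/-- If every induced subgraph of `G` on at least two vertices has a pair of distinct
vertices with symmetric difference at most `s`, then for every `k` with `2k ≤ n`,
`G` has `k` pairwise-disjoint pairs of distinct vertices, each of symmetric difference
at most `s + 2(k-1)` in `G`. -/
theorem stmt8 {V : Type*} [Fintype V] [DecidableEq V] (G : SimpleGraph V)
    [DecidableRel G.Adj] (s : ℕ) (hn : 2 ≤ Fintype.card V)
    (hsd : ∀ t : Finset V, 2 ≤ t.card → ∃ u ∈ t, ∃ v ∈ t, u ≠ v ∧ sdOn G t u v ≤ s) :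
    ∀ k : ℕ, 2 * k ≤ Fintype.card V →
      ∃ p : Fin k → V × V,
        (∀ i, (p i).1 ≠ (p i).2) ∧
        (Function.Injective fun x : Fin k × Bool =>
          if x.2 then (p x.1).1 else (p x.1).2) ∧
        (∀ i, sdOn G Finset.univ (p i).1 (p i).2 ≤ s + 2 * (k - 1)) := by
  intro k hk
  obtain ⟨p, _, _, h3, h4, h5⟩ := stmt8_aux G s hsd k Finset.univ (by simpa using hk)
  exact ⟨p, h3, h4, h5⟩
end

section
/- Let D be a DAG whose sinks are the vertices of a graph G, with a set B of compressed edges, such that uv ∈ E(G) iff there is xy ∈ B with directed paths x→u and y→v in D. Construct the weighted digraph H as follows: take two disjoint copies D↓ and D↑ of D identified on V(G), where D↓ has all edges of D directed toward the sinks with weight 0, D↑ has all edges of D reversed (directed away from the sinks) with weight 0, and for each xy ∈ B add an edge of weight 1 from the copy of x in D↑ to the copy of y in D↓. Then for all u, v ∈ V(G), the distance from u to v in H equals the distance from u to v in G (edges of G directed both ways, unit weights). -/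
open scoped Classical

/-- Walks in a weighted digraph (weight `⊤` = no edge) with their total cost. -/
inductive CostWalk {α : Type*} (w : α → α → ℕ∞) : α → α → ℕ∞ → Prop
  | nil (a : α) : CostWalk w a a 0
  | cons {a b c : α} {x : ℕ∞} : w a b ≠ ⊤ → CostWalk w b c x → CostWalk w a c (w a b + x)

/-- Distance in a weighted digraph: least total weight of a directed walk. -/
noncomputable def ddist {α : Type*} (w : α → α → ℕ∞) (a b : α) : ℕ∞ :=
  sInf {x | CostWalk w a b x}

/-- `x` is a sink of the digraph `E`. -/
def IsSink {N : Type*} (E : N → N → Prop) (x : N) : Prop := ∀ y, ¬ E x y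

/-- Vertex set of `H`: two copies of `D` identified on the sinks.  `Sum.inl` is the
bottom copy `D↓` (all of `N`), `Sum.inr` holds the non-sink nodes of the top copy. -/
noncomputable def upCopy {N : Type*} (E : N → N → Prop) (x : N) :
    N ⊕ {x : N // ¬ IsSink E x} :=
  if h : IsSink E x then Sum.inl x else Sum.inr ⟨x, h⟩

lemma upCopy_eq_inl {N : Type*} {E : N → N → Prop} {z t : N}
    (h : upCopy E z = Sum.inl t) : z = t ∧ IsSink E z := by
  unfold upCopy at h
  split at h
  · exact ⟨Sum.inl.inj h, ‹_›⟩
  · simp at h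

lemma upCopy_inj {N : Type*} {E : N → N → Prop} {z t : N}
    (h : upCopy E z = upCopy E t) : z = t := by
  unfold upCopy at h
  split at h <;> split at h <;> simp_all

lemma upCopy_sink {N : Type*} {E : N → N → Prop} {z : N} (h : IsSink E z) :
    upCopy E z = Sum.inl z := dif_pos h

lemma sink_rtg_eq {N : Type*} {E : N → N → Prop} {z t : N}
    (h : Relation.ReflTransGen E z t) (hz : IsSink E z) : z = t := by
  rcases h.cases_head with rfl | ⟨c, hc, _⟩
  · rfl
  · exact absurd hc (hz c)

lemma CostWalk.append {α : Type*} {w : α → α → ℕ∞} {a b c : α} {x y : ℕ∞}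
    (h1 : CostWalk w a b x) (h2 : CostWalk w b c y) : CostWalk w a c (x + y) := by
  induction h1 with
  | nil => simpa using h2
  | cons hw _ ih => rw [add_assoc]; exact .cons hw (ih h2)

/-- Prepend a zero-weight edge. -/
lemma CostWalk.zcons {α : Type*} {w : α → α → ℕ∞} {a b c : α} {x : ℕ∞}
    (h0 : w a b = 0) (h : CostWalk w b c x) : CostWalk w a c x := by
  have := CostWalk.cons (w := w) (a := a) (by simp [h0]) h
  rwa [h0, zero_add] at this

/-- The Bannach–Marwitz–Tantau construction: given a DAG compression `(D,B)` of `G`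
(sinks of `D` are the vertices of `G`), the weighted digraph `H` made of a bottom copy
of `D` (edges toward the sinks, weight 0), a top copy of `D` (edges reversed, weight 0),
identified on the sinks, plus an edge of weight 1 from the top copy of `x` to the bottom
copy of `y` for each compressed edge `(x,y) ∈ B`, satisfies
`dist_H(u,v) = dist_G(u,v)` for all vertices `u, v` of `G`. -/
theorem stmt14 {N : Type*} (E : N → N → Prop)
    (hacyc : ∀ x, ¬ Relation.TransGen E x x)
    (B : Set (N × N))
    (G : SimpleGraph {x : N // IsSink E x})
    (hG : ∀ u v : {x : N // IsSink E x},
      G.Adj u v ↔ ∃ p ∈ B, Relation.ReflTransGen E p.1 u.1 ∧ Relation.ReflTransGen E p.2 v.1)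
    (w : (N ⊕ {x : N // ¬ IsSink E x}) → (N ⊕ {x : N // ¬ IsSink E x}) → ℕ∞)
    (hw : ∀ a b, w a b =
      if (∃ x y, E x y ∧ a = Sum.inl x ∧ b = Sum.inl y) ∨
         (∃ x y, E x y ∧ a = upCopy E y ∧ b = upCopy E x)
      then 0
      else if ∃ p ∈ B, a = upCopy E p.1 ∧ b = Sum.inl p.2 then 1 else ⊤) :
    ∀ u v : {x : N // IsSink E x},
      ddist w (Sum.inl u.1) (Sum.inl v.1) = G.edist u v := by
  -- zero-weight walks down the bottom copy
  have down : ∀ z t : N, Relation.ReflTransGen E z t →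
      CostWalk w (Sum.inl z) (Sum.inl t) 0 := by
    intro z t h
    induction h using Relation.ReflTransGen.head_induction_on with
    | refl => exact .nil _
    | head hE _ ih =>
      exact ih.zcons (by rw [hw]; rw [if_pos (Or.inl ⟨_, _, hE, rfl, rfl⟩)])
  -- zero-weight walks up the top copy
  have up : ∀ z t : N, Relation.ReflTransGen E z t →
      CostWalk w (upCopy E t) (upCopy E z) 0 := by
    intro z t h
    induction h with
    | refl => exact .nil _
    | tail _ hE ih =>
      exact CostWalk.zcons (c := upCopy E z)
        (by rw [hw]; rw [if_pos (Or.inr ⟨_, _, hE, rfl, rfl⟩)]) ih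
  intro u v
  apply le_antisymm
  · -- ddist ≤ edist : simulate any walk in G
    have main : ∀ (a b : {x : N // IsSink E x}) (p : G.Walk a b),
        ∃ c ≤ (p.length : ℕ∞), CostWalk w (Sum.inl a.1) (Sum.inl b.1) c := by
      intro a b p
      induction p with
      | nil => exact ⟨0, by simp, .nil _⟩
      | cons hadj p ih =>
        rename_i a a' b
        obtain ⟨c, hc, hwalk⟩ := ih
        obtain ⟨q, hqB, h1, h2⟩ := (hG a a').1 hadj
        have hB : w (upCopy E q.1) (Sum.inl q.2) ≤ 1 := by
          rw [hw]; split
          · exact zero_le_one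
          · rw [if_pos ⟨q, hqB, rfl, rfl⟩]
        have hBne : w (upCopy E q.1) (Sum.inl q.2) ≠ ⊤ :=
          fun h => by simp [h] at hB
        have gadget : CostWalk w (Sum.inl a.1) (Sum.inl b.1)
            (w (upCopy E q.1) (Sum.inl q.2) + c) := by
          have w1 := up q.1 a.1 h1
          rw [upCopy_sink a.2] at w1
          have w2 := (down q.2 a'.1 h2).append hwalk
          rw [zero_add] at w2
          have := w1.append (CostWalk.cons hBne w2)
          rwa [zero_add] at this
        refine ⟨_, ?_, gadget⟩
        calc w (upCopy E q.1) (Sum.inl q.2) + c ≤ 1 + (p.length : ℕ∞) :=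
              add_le_add hB hc
          _ = ((p.length + 1 : ℕ) : ℕ∞) := by push_cast; ring
          _ = _ := by simp [SimpleGraph.Walk.length_cons]
    show ddist w _ _ ≤ ⨅ p : G.Walk u v, (p.length : ℕ∞)
    refine le_iInf fun p => ?_
    obtain ⟨c, hc, hwalk⟩ := main u v p
    exact le_trans (sInf_le hwalk) hc
  · -- edist ≤ ddist : any walk in H is at least as long as the distance in G
    have key : ∀ (x : ℕ∞) (a c : N ⊕ {x : N // ¬ IsSink E x}),
        CostWalk w a c x → c = Sum.inl v.1 → ∀ u' : {x : N // IsSink E x},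
        (∀ z, a = upCopy E z → Relation.ReflTransGen E z u'.1 → G.edist u' v ≤ x) ∧
        (∀ z, a = Sum.inl z →
          (∃ p ∈ B, Relation.ReflTransGen E p.1 u'.1 ∧ Relation.ReflTransGen E p.2 z) →
          G.edist u' v ≤ x + 1) := by
      intro x a c hwalk
      induction hwalk with
      | nil =>
        rintro rfl u'
        constructor
        · intro z hz hRT
          obtain ⟨hzv, hs⟩ := upCopy_eq_inl hz.symm
          have huv : u' = v := Subtype.ext ((sink_rtg_eq hRT hs).symm.trans hzv)
          simp [huv, SimpleGraph.edist_self]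
        · rintro z hz ⟨p, hp, h1, h2⟩
          have hzv : z = v.1 := Sum.inl.inj hz.symm
          subst hzv
          have hadj : G.Adj u' v := (hG u' v).2 ⟨p, hp, h1, h2⟩
          have := SimpleGraph.edist_le hadj.toWalk
          simpa using this
      | cons hwab hwalk ih =>
        rename_i a b _ x'
        intro hcv u'
        replace ih := ih hcv
        by_cases hc1 : (∃ x y, E x y ∧ a = Sum.inl x ∧ b = Sum.inl y) ∨
            (∃ x y, E x y ∧ a = upCopy E y ∧ b = upCopy E x)
        · have h0 : w a b = 0 := by rw [hw]; rw [if_pos hc1]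
          rw [h0, zero_add]
          rcases hc1 with ⟨x0, y0, hE, rfl, rfl⟩ | ⟨x0, y0, hE, rfl, rfl⟩
          · -- edge down in the bottom copy
            constructor
            · intro z hz _
              obtain ⟨rfl, hs⟩ := upCopy_eq_inl hz.symm
              exact absurd hE (hs y0)
            · rintro z hz ⟨p, hp, h1, h2⟩
              have : z = x0 := Sum.inl.inj hz.symm
              subst this
              exact (ih u').2 y0 rfl ⟨p, hp, h1, h2.tail hE⟩
          · -- edge up in the top copy
            constructor
            · intro z hz hRT
              have : z = y0 := upCopy_inj hz.symm
              subst this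
              exact (ih u').1 x0 rfl (Relation.ReflTransGen.head hE hRT)
            · rintro z hz ⟨p, hp, h1, h2⟩
              obtain ⟨rfl, hs⟩ := upCopy_eq_inl (hz ▸ rfl : upCopy E y0 = Sum.inl z)
              have hadj : G.Adj u' ⟨y0, hs⟩ := (hG u' ⟨y0, hs⟩).2 ⟨p, hp, h1, h2⟩
              have h3 : G.edist (⟨y0, hs⟩ : {x : N // IsSink E x}) v ≤ x' :=
                (ih ⟨y0, hs⟩).1 x0 rfl (Relation.ReflTransGen.single hE)
              have h4 : G.edist u' (⟨y0, hs⟩ : {x : N // IsSink E x}) ≤ 1 := by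
                have := SimpleGraph.edist_le hadj.toWalk
                simpa using this
              calc G.edist u' v ≤ G.edist u' ⟨y0, hs⟩ + G.edist ⟨y0, hs⟩ v :=
                    SimpleGraph.edist_triangle
                _ ≤ 1 + x' := add_le_add h4 h3
                _ = x' + 1 := add_comm _ _
        · by_cases hc2 : ∃ p ∈ B, a = upCopy E p.1 ∧ b = Sum.inl p.2
          · have h1w : w a b = 1 := by rw [hw]; rw [if_neg hc1, if_pos hc2]
            rw [h1w]
            obtain ⟨p, hp, rfl, rfl⟩ := hc2
            constructor
            · intro z hz hRT
              have : z = p.1 := upCopy_inj hz.symm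
              subst this
              have := (ih u').2 p.2 rfl ⟨p, hp, hRT, Relation.ReflTransGen.refl⟩
              rwa [add_comm] at this
            · rintro z hz ⟨q, hq, h1, h2⟩
              obtain ⟨hzp, hs⟩ := upCopy_eq_inl (hz ▸ rfl : upCopy E p.1 = Sum.inl z)
              subst hzp
              have hadj : G.Adj u' ⟨p.1, hs⟩ :=
                (hG u' ⟨p.1, hs⟩).2 ⟨q, hq, h1, h2⟩
              have h3 : G.edist (⟨p.1, hs⟩ : {x : N // IsSink E x}) v ≤ x' + 1 :=
                (ih ⟨p.1, hs⟩).2 p.2 rfl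
                  ⟨p, hp, Relation.ReflTransGen.refl, Relation.ReflTransGen.refl⟩
              have h4 : G.edist u' (⟨p.1, hs⟩ : {x : N // IsSink E x}) ≤ 1 := by
                have := SimpleGraph.edist_le hadj.toWalk
                simpa using this
              calc G.edist u' v ≤ G.edist u' ⟨p.1, hs⟩ + G.edist ⟨p.1, hs⟩ v :=
                    SimpleGraph.edist_triangle
                _ ≤ 1 + (x' + 1) := add_le_add h4 h3
                _ = (1 + x') + 1 := by rw [add_assoc]
          · exact absurd (by rw [hw]; rw [if_neg hc1, if_neg hc2]) hwab
    refine le_sInf fun x hx => ?_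
    exact (key x _ _ hx rfl u).1 u.1 (upCopy_sink u.2).symm Relation.ReflTransGen.refl
end
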